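/- Let Γ_k → Γ̃ be a sequence of positive semidefinite p×p matrices, ε_k ∈ ℝ^p with ε_k/μ_k → 0, μ_k → 0 with μ_k > 0, and u_k = Γ_k β₀ + ε_k. Let J : ℝ^p → ℝ be convex, K a compact convex neighborhood of β₀, M ⊆ ℝ^p a set containing β₀, and suppose β₀ is the unique minimizer over ℝ^p of J(β) subject to Γ̃β = Γ̃β₀. If β_k minimizes β ↦ J(β) + (1/(2μ_k))⟨Γ_k β, β⟩ − (1/μ_k)⟨β, u_k⟩ over M ∩ K, then β_k → β₀. -/

import Mathlib

open scoped RealInnerProductSpace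
open Filter Topology

/-- For a symmetric positive semidefinite operator, vanishing of the quadratic form
at `v` forces `T v = 0`. -/
lemma psd_apply_eq_zero {E : Type*} [NormedAddCommGroup E] [InnerProductSpace ℝ E]
    (T : E →L[ℝ] E) (hsym : ∀ x y : E, ⟪T x, y⟫ = ⟪x, T y⟫)
    (hpsd : ∀ v : E, 0 ≤ ⟪T v, v⟫) {v : E} (hv : ⟪T v, v⟫ = 0) : T v = 0 := by
  set a : ℝ := ⟪T v, T v⟫ with ha
  set c : ℝ := ⟪T (T v), T v⟫ with hc
  have hc0 : 0 ≤ c := hpsd (T v)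
  have key : ∀ t : ℝ, 0 ≤ 2 * t * a + t ^ 2 * c := by
    intro t
    have h0 := hpsd (v + t • T v)
    have hexp : ⟪T (v + t • T v), v + t • T v⟫ = 2 * t * a + t ^ 2 * c := by
      have hTv : ⟪T (T v), v⟫ = a := by rw [hsym]
      simp only [map_add, map_smul, inner_add_left, inner_add_right, inner_smul_left,
        inner_smul_right, RCLike.conj_to_real, hv, hTv]
      try ring
    rw [hexp] at h0; exact h0
  have ha0 : a = 0 := by
    have h1 := key (-(a / (c + 1)))
    have hcpos : (0:ℝ) < c + 1 := by linarith
    have ha2 : 0 ≤ a := real_inner_self_nonneg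
    have h2 : 0 ≤ (2 * (-(a / (c + 1))) * a + (-(a / (c + 1))) ^ 2 * c) * (c + 1) ^ 2 :=
      mul_nonneg h1 (sq_nonneg _)
    have h3 : (2 * (-(a / (c + 1))) * a + (-(a / (c + 1))) ^ 2 * c) * (c + 1) ^ 2 =
        -(2 * a ^ 2 * (c + 1)) + a ^ 2 * c := by
      field_simp
    rw [h3] at h2
    nlinarith [sq_nonneg a]
  have : ‖T v‖ = 0 := by
    have := real_inner_self_eq_norm_sq (T v)
    nlinarith [norm_nonneg (T v)]
  simpa [norm_eq_zero] using this

/-- Lemma 1: convergence of the minimizers of the constrained penalized problems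
to `β₀` under the canonical parameter scaling. -/
theorem constrained_minimizers_converge {p : ℕ}
    (J : EuclideanSpace ℝ (Fin p) → ℝ) (hJ : ConvexOn ℝ Set.univ J)
    (Γ : ℕ → EuclideanSpace ℝ (Fin p) →L[ℝ] EuclideanSpace ℝ (Fin p))
    (Γt : EuclideanSpace ℝ (Fin p) →L[ℝ] EuclideanSpace ℝ (Fin p))
    (hΓpsd : ∀ k v, 0 ≤ ⟪Γ k v, v⟫) (hΓsym : ∀ k, IsSelfAdjoint (Γ k))
    (hΓ : Tendsto Γ atTop (𝓝 Γt))
    (ε : ℕ → EuclideanSpace ℝ (Fin p)) (μ : ℕ → ℝ) (hμpos : ∀ k, 0 < μ k)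
    (hεμ : Tendsto (fun k => (μ k)⁻¹ • ε k) atTop (𝓝 0))
    (hμ : Tendsto μ atTop (𝓝 0))
    (β₀ : EuclideanSpace ℝ (Fin p))
    (u : ℕ → EuclideanSpace ℝ (Fin p)) (hu : ∀ k, u k = Γ k β₀ + ε k)
    (K : Set (EuclideanSpace ℝ (Fin p))) (hKcpt : IsCompact K) (hKcvx : Convex ℝ K)
    (hKnbd : K ∈ 𝓝 β₀)
    (M : Set (EuclideanSpace ℝ (Fin p))) (hβ₀M : β₀ ∈ M)
    (huniq : ∀ β, Γt β = Γt β₀ → β ≠ β₀ → J β₀ < J β)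
    (β : ℕ → EuclideanSpace ℝ (Fin p))
    (hβmem : ∀ k, β k ∈ M ∩ K)
    (hβmin : ∀ k, ∀ β' ∈ M ∩ K,
      J (β k) + (1 / (2 * μ k)) * ⟪Γ k (β k), β k⟫ - (1 / μ k) * ⟪β k, u k⟫ ≤
      J β' + (1 / (2 * μ k)) * ⟪Γ k β', β'⟫ - (1 / μ k) * ⟪β', u k⟫) :
    Tendsto β atTop (𝓝 β₀) := by
  -- continuity of J
  have hJcont : Continuous J := hJ.locallyLipschitz.continuous
  -- symmetry of each Γ k as inner products
  have hsymk : ∀ k (x y : EuclideanSpace ℝ (Fin p)), ⟪Γ k x, y⟫ = ⟪x, Γ k y⟫ := by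
    intro k x y
    have := (hΓsym k).isSymmetric x y
    simpa using this
  -- the key per-k inequality
  have key : ∀ k, J (β k) + (1 / (2 * μ k)) * ⟪Γ k (β k - β₀), β k - β₀⟫ ≤
      J β₀ + ⟪β k - β₀, (μ k)⁻¹ • ε k⟫ := by
    intro k
    have hμne : μ k ≠ 0 := (hμpos k).ne'
    have h := hβmin k β₀ ⟨hβ₀M, mem_of_mem_nhds hKnbd⟩
    rw [hu] at h
    have hb : ⟪Γ k (β k), β₀⟫ = ⟪Γ k β₀, β k⟫ := by
      rw [hsymk k]; exact real_inner_comm _ _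
    have hexp : ⟪Γ k (β k - β₀), β k - β₀⟫ =
        ⟪Γ k (β k), β k⟫ - 2 * ⟪Γ k β₀, β k⟫ + ⟪Γ k β₀, β₀⟫ := by
      simp only [map_sub, inner_sub_left, inner_sub_right]
      rw [hb]; ring
    have hbu : ⟪β k, Γ k β₀ + ε k⟫ = ⟪Γ k β₀, β k⟫ + ⟪β k, ε k⟫ := by
      rw [inner_add_right, real_inner_comm (β k) (Γ k β₀)]
    have hbu0 : ⟪β₀, Γ k β₀ + ε k⟫ = ⟪Γ k β₀, β₀⟫ + ⟪β₀, ε k⟫ := by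
      rw [inner_add_right, real_inner_comm β₀ (Γ k β₀)]
    have hsm : ⟪β k - β₀, (μ k)⁻¹ • ε k⟫ = (μ k)⁻¹ * (⟪β k, ε k⟫ - ⟪β₀, ε k⟫) := by
      rw [real_inner_smul_right, inner_sub_left]
    rw [hbu, hbu0] at h
    rw [hexp, hsm]
    have e3 : 1 / (2 * μ k) * ⟪Γ k β₀, β₀⟫ + 1 / (2 * μ k) * ⟪Γ k β₀, β₀⟫ =
        1 / μ k * ⟪Γ k β₀, β₀⟫ := by
      field_simp
      ring
    have e1 : 1 / (2 * μ k) * (⟪Γ k (β k), β k⟫ - 2 * ⟪Γ k β₀, β k⟫ + ⟪Γ k β₀, β₀⟫) =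
        1 / (2 * μ k) * ⟪Γ k (β k), β k⟫ - 1 / μ k * ⟪Γ k β₀, β k⟫ +
        1 / (2 * μ k) * ⟪Γ k β₀, β₀⟫ := by
      field_simp
    have e2 : (μ k)⁻¹ * (⟪β k, ε k⟫ - ⟪β₀, ε k⟫) =
        1 / μ k * ⟪β k, ε k⟫ - 1 / μ k * ⟪β₀, ε k⟫ := by
      field_simp
    have e4 : 1 / μ k * (⟪Γ k β₀, β k⟫ + ⟪β k, ε k⟫) =
        1 / μ k * ⟪Γ k β₀, β k⟫ + 1 / μ k * ⟪β k, ε k⟫ := by ring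
    have e5 : 1 / μ k * (⟪Γ k β₀, β₀⟫ + ⟪β₀, ε k⟫) =
        1 / μ k * ⟪Γ k β₀, β₀⟫ + 1 / μ k * ⟪β₀, ε k⟫ := by ring
    rw [e4, e5] at h
    rw [e1, e2]
    linarith [h, e3]
  -- limit criterion via subsequences
  apply tendsto_of_subseq_tendsto
  intro ns hns
  obtain ⟨βs, hβsK, ms, hms, hconv⟩ :=
    hKcpt.tendsto_subseq (x := fun n => β (ns n)) (fun n => (hβmem (ns n)).2)
  refine ⟨ms, ?_⟩
  -- index sequence
  set φ : ℕ → ℕ := fun n => ns (ms n) with hφ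
  have hφtop : Tendsto φ atTop atTop := hns.comp hms.tendsto_atTop
  have hconv' : Tendsto (fun n => β (φ n)) atTop (𝓝 βs) := hconv
  suffices hsb : βs = β₀ by rwa [hsb] at hconv'
  -- limits of the various pieces
  have hd : Tendsto (fun n => β (φ n) - β₀) atTop (𝓝 (βs - β₀)) :=
    hconv'.sub tendsto_const_nhds
  have hεφ : Tendsto (fun n => (μ (φ n))⁻¹ • ε (φ n)) atTop (𝓝 0) := hεμ.comp hφtop
  have hinncross : Tendsto (fun n => ⟪β (φ n) - β₀, (μ (φ n))⁻¹ • ε (φ n)⟫)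
      atTop (𝓝 0) := by
    have h : Tendsto (fun n => ⟪β (φ n) - β₀, (μ (φ n))⁻¹ • ε (φ n)⟫) atTop
        (𝓝 ⟪βs - β₀, (0 : EuclideanSpace ℝ (Fin p))⟫) := hd.inner hεφ
    have h0 : ⟪βs - β₀, (0 : EuclideanSpace ℝ (Fin p))⟫ = (0:ℝ) := inner_zero_right (𝕜 := ℝ) _
    rwa [h0] at h
  have hJφ : Tendsto (fun n => J (β (φ n))) atTop (𝓝 (J βs)) :=
    (hJcont.tendsto βs).comp hconv'
  have hΓφ : Tendsto (fun n => Γ (φ n)) atTop (𝓝 Γt) := hΓ.comp hφtop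
  have hΓd : Tendsto (fun n => Γ (φ n) (β (φ n) - β₀)) atTop (𝓝 (Γt (βs - β₀))) := by
    have : Tendsto (fun n => (Γ (φ n), β (φ n) - β₀)) atTop (𝓝 (Γt, βs - β₀)) :=
      hΓφ.prodMk_nhds hd
    exact (isBoundedBilinearMap_apply.continuous.tendsto (Γt, βs - β₀)).comp this
  have hQ : Tendsto (fun n => ⟪Γ (φ n) (β (φ n) - β₀), β (φ n) - β₀⟫)
      atTop (𝓝 ⟪Γt (βs - β₀), βs - β₀⟫) := hΓd.inner hd
  have hμφ : Tendsto (fun n => μ (φ n)) atTop (𝓝 0) := hμ.comp hφtop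
  -- (a) J βs ≤ J β₀
  have hJle : J βs ≤ J β₀ := by
    have hle : ∀ n, J (β (φ n)) ≤ J β₀ + ⟪β (φ n) - β₀, (μ (φ n))⁻¹ • ε (φ n)⟫ := by
      intro n
      have hk := key (φ n)
      have hq := hΓpsd (φ n) (β (φ n) - β₀)
      have h2 : (0:ℝ) < 2 * μ (φ n) := by linarith [hμpos (φ n)]
      have : 0 ≤ (1 / (2 * μ (φ n))) * ⟪Γ (φ n) (β (φ n) - β₀), β (φ n) - β₀⟫ :=
        mul_nonneg (by positivity) hq
      linarith
    have hrhs : Tendsto (fun n => J β₀ + ⟪β (φ n) - β₀, (μ (φ n))⁻¹ • ε (φ n)⟫)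
        atTop (𝓝 (J β₀ + 0)) := tendsto_const_nhds.add hinncross
    have := le_of_tendsto_of_tendsto hJφ hrhs (Eventually.of_forall hle)
    simpa using this
  -- (b) quadratic form vanishes at βs - β₀
  have hQ0 : ⟪Γt (βs - β₀), βs - β₀⟫ = 0 := by
    have hub : ∀ n, ⟪Γ (φ n) (β (φ n) - β₀), β (φ n) - β₀⟫ ≤
        2 * μ (φ n) * (J β₀ - J (β (φ n)) + ⟪β (φ n) - β₀, (μ (φ n))⁻¹ • ε (φ n)⟫) := by
      intro n
      have hk := key (φ n)
      have h2 : (0:ℝ) < 2 * μ (φ n) := by linarith [hμpos (φ n)]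
      have h3 : (1 / (2 * μ (φ n))) * ⟪Γ (φ n) (β (φ n) - β₀), β (φ n) - β₀⟫ ≤
          J β₀ - J (β (φ n)) + ⟪β (φ n) - β₀, (μ (φ n))⁻¹ • ε (φ n)⟫ := by linarith
      calc ⟪Γ (φ n) (β (φ n) - β₀), β (φ n) - β₀⟫
          = 2 * μ (φ n) * ((1 / (2 * μ (φ n))) *
            ⟪Γ (φ n) (β (φ n) - β₀), β (φ n) - β₀⟫) := by
            field_simp
            rw [mul_div_assoc, div_self (hμpos (φ n)).ne', mul_one]
        _ ≤ 2 * μ (φ n) * (J β₀ - J (β (φ n)) +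
            ⟪β (φ n) - β₀, (μ (φ n))⁻¹ • ε (φ n)⟫) := by
            exact mul_le_mul_of_nonneg_left h3 (by linarith)
    have hrhs : Tendsto (fun n => 2 * μ (φ n) * (J β₀ - J (β (φ n)) +
        ⟪β (φ n) - β₀, (μ (φ n))⁻¹ • ε (φ n)⟫)) atTop
        (𝓝 (2 * 0 * (J β₀ - J βs + 0))) := by
      exact ((tendsto_const_nhds.mul hμφ).mul
        ((tendsto_const_nhds.sub hJφ).add hinncross))
    have hle : ⟪Γt (βs - β₀), βs - β₀⟫ ≤ 2 * 0 * (J β₀ - J βs + 0) :=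
      le_of_tendsto_of_tendsto hQ hrhs (Eventually.of_forall hub)
    have hge : 0 ≤ ⟪Γt (βs - β₀), βs - β₀⟫ :=
      le_of_tendsto_of_tendsto tendsto_const_nhds hQ
        (Eventually.of_forall fun n => hΓpsd (φ n) _)
    have : 2 * (0:ℝ) * (J β₀ - J βs + 0) = 0 := by ring
    linarith [hle, hge, this.le, this.ge]
  -- Γt is symmetric and psd as a limit
  have hΓtsym : ∀ x y : EuclideanSpace ℝ (Fin p), ⟪Γt x, y⟫ = ⟪x, Γt y⟫ := by
    intro x y
    have h1 : Tendsto (fun k => ⟪Γ k x, y⟫) atTop (𝓝 ⟪Γt x, y⟫) := by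
      have hx : Tendsto (fun k => Γ k x) atTop (𝓝 (Γt x)) := by
        have : Tendsto (fun k => (Γ k, x)) atTop (𝓝 (Γt, x)) :=
          hΓ.prodMk_nhds tendsto_const_nhds
        exact (isBoundedBilinearMap_apply.continuous.tendsto (Γt, x)).comp this
      exact hx.inner tendsto_const_nhds
    have h2 : Tendsto (fun k => ⟪Γ k x, y⟫) atTop (𝓝 ⟪x, Γt y⟫) := by
      have hy : Tendsto (fun k => Γ k y) atTop (𝓝 (Γt y)) := by
        have : Tendsto (fun k => (Γ k, y)) atTop (𝓝 (Γt, y)) :=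
          hΓ.prodMk_nhds tendsto_const_nhds
        exact (isBoundedBilinearMap_apply.continuous.tendsto (Γt, y)).comp this
      have h3 : Tendsto (fun k => ⟪x, Γ k y⟫) atTop (𝓝 ⟪x, Γt y⟫) :=
        (tendsto_const_nhds (x := x)).inner hy
      simpa only [hsymk] using h3
    exact tendsto_nhds_unique h1 h2
  have hΓtpsd : ∀ v : EuclideanSpace ℝ (Fin p), 0 ≤ ⟪Γt v, v⟫ := by
    intro v
    have hv : Tendsto (fun k => Γ k v) atTop (𝓝 (Γt v)) := by
      have : Tendsto (fun k => (Γ k, v)) atTop (𝓝 (Γt, v)) :=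
        hΓ.prodMk_nhds tendsto_const_nhds
      exact (isBoundedBilinearMap_apply.continuous.tendsto (Γt, v)).comp this
    exact le_of_tendsto_of_tendsto tendsto_const_nhds (hv.inner tendsto_const_nhds)
      (Eventually.of_forall fun k => hΓpsd k v)
  have hΓeq : Γt βs = Γt β₀ := by
    have := psd_apply_eq_zero Γt hΓtsym hΓtpsd hQ0
    have h' : Γt βs - Γt β₀ = 0 := by rw [← map_sub]; exact this
    exact sub_eq_zero.mp h'
  -- conclude βs = β₀
  by_contra hne
  exact absurd hJle (not_le.mpr (huniq βs hΓeq hne))
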